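/- Let β > 0 and 0 < ω < β. Every continuously differentiable solution (u, v) : ℝ → ℝ² of the Hamiltonian system u'(x) = −(ω+β)v(x) − v(x)³, v'(x) = (ω−β)u(x) + u(x)³ with initial condition u(0) = √(2(β−ω)), v(0) = 0 is a homoclinic orbit to the origin: (u(x), v(x)) → (0, 0) as x → +∞ and as x → −∞. -/

import Mathlib

open Filter Topology

section
open Set Metric

/-- If `f` tends to a finite limit at `+∞` and its derivative also tends to a limit `c`,
then `c = 0`. -/
lemma limit_of_deriv_eq_zero {f f' : ℝ → ℝ} {L c : ℝ}
    (hd : ∀ x, HasDerivAt f (f' x) x)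
    (hL : Tendsto f atTop (𝓝 L)) (hc : Tendsto f' atTop (𝓝 c)) : c = 0 := by
  have key : ∀ n : ℕ, ∃ ξ, ξ ∈ Set.Ioo (n : ℝ) (n + 1) ∧ f' ξ = f (n + 1) - f n := by
    intro n
    obtain ⟨ξ, hξ, h⟩ := exists_hasDerivAt_eq_slope f f' (by linarith : (n : ℝ) < n + 1)
      (fun x _ => (hd x).continuousAt.continuousWithinAt) (fun x _ => hd x)
    exact ⟨ξ, hξ, by rw [h]; simp⟩
  choose ξ hmem hval using key
  have hξtop : Tendsto ξ atTop atTop :=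
    tendsto_atTop_mono (fun n => (hmem n).1.le) tendsto_natCast_atTop_atTop
  have h1 : Tendsto (fun n => f' (ξ n)) atTop (𝓝 c) := hc.comp hξtop
  have h2 : Tendsto (fun n : ℕ => f ((n : ℝ) + 1) - f (n : ℝ)) atTop (𝓝 (L - L)) :=
    (hL.comp (tendsto_atTop_add_const_right _ 1 tendsto_natCast_atTop_atTop)).sub
      (hL.comp tendsto_natCast_atTop_atTop)
  have := tendsto_nhds_unique ((tendsto_congr fun n => hval n).mp h1) h2
  simpa using this

set_option maxHeartbeats 1000000 in
/-- Forward half of the homoclinic orbit theorem. -/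
lemma homoclinic_forward (β ω : ℝ) (hβ : 0 < β) (hω : 0 < ω) (hωβ : ω < β)
    (u v : ℝ → ℝ) (hu : ContDiff ℝ 1 u) (hv : ContDiff ℝ 1 v)
    (hu' : ∀ x : ℝ, deriv u x = -(ω + β) * v x - (v x) ^ 3)
    (hv' : ∀ x : ℝ, deriv v x = (ω - β) * u x + (u x) ^ 3)
    (hu0 : u 0 = Real.sqrt (2 * (β - ω))) (hv0 : v 0 = 0) :
    Tendsto (fun x => (u x, v x)) atTop (𝓝 ((0 : ℝ), (0 : ℝ))) := by
  have hβω : (0:ℝ) < β - ω := by linarith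
  have hu0sq : u 0 ^ 2 = 2 * (β - ω) := by
    rw [hu0, Real.sq_sqrt (by linarith)]
  have hu0pos : 0 < u 0 := by
    rw [hu0]; exact Real.sqrt_pos.mpr (by linarith)
  have hud : ∀ x, HasDerivAt u (-(ω + β) * v x - (v x) ^ 3) x := fun x => by
    rw [← hu' x]; exact (hu.differentiable one_ne_zero x).hasDerivAt
  have hvd : ∀ x, HasDerivAt v ((ω - β) * u x + (u x) ^ 3) x := fun x => by
    rw [← hv' x]; exact (hv.differentiable one_ne_zero x).hasDerivAt
  -- Energy conservation
  set E : ℝ → ℝ := fun x => (u x)^4/4 + (v x)^4/4 + β/2*((v x)^2 - (u x)^2)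
      + ω/2*((u x)^2 + (v x)^2) with hE_def
  have hEd : ∀ x, HasDerivAt E 0 x := by
    intro x
    have h : HasDerivAt E
        ((4 * u x ^ 3 * (-(ω + β) * v x - (v x) ^ 3))/4
          + (4 * v x ^ 3 * ((ω - β) * u x + (u x) ^ 3))/4
          + β/2 * (2 * v x ^ 1 * ((ω - β) * u x + (u x) ^ 3)
              - 2 * u x ^ 1 * (-(ω + β) * v x - (v x) ^ 3))
          + ω/2 * (2 * u x ^ 1 * (-(ω + β) * v x - (v x) ^ 3)
              + 2 * v x ^ 1 * ((ω - β) * u x + (u x) ^ 3))) x := by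
      exact ((((hud x).pow 4).div_const 4).add (((hvd x).pow 4).div_const 4)).add
        ((((hvd x).pow 2).sub ((hud x).pow 2)).const_mul (β/2)) |>.add
        ((((hud x).pow 2).add ((hvd x).pow 2)).const_mul (ω/2))
    convert h using 1
    ring
  have hE0 : ∀ x, (u x)^4/4 + (v x)^4/4 + β/2*((v x)^2 - (u x)^2)
      + ω/2*((u x)^2 + (v x)^2) = 0 := by
    intro x
    have hcon : ∀ y z : ℝ, E y = E z := fun y z =>
      is_const_of_deriv_eq_zero (fun t => (hEd t).differentiableAt)
        (fun t => (hEd t).deriv) y z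
    have hzero : E 0 = 0 := by
      simp only [hE_def, hv0]
      have h4 : u 0 ^ 4 = (2 * (β - ω))^2 := by
        rw [show (4:ℕ) = 2*2 from rfl, pow_mul, hu0sq]
      rw [h4, hu0sq]
      ring
    have := hcon x 0
    rw [hzero] at this
    exact this
  -- a priori bounds
  have husq : ∀ x, (u x)^2 ≤ 2*β := by
    intro x
    have h := hE0 x
    nlinarith [sq_nonneg (u x), sq_nonneg (v x), sq_nonneg ((u x)^2 - 2*β),
      sq_nonneg ((u x)*(v x)), sq_nonneg ((u x)^2)]
  have hvsqb : ∀ x, (v x)^2 ≤ 2*β := by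
    intro x
    have h := hE0 x
    nlinarith [sq_nonneg (u x), sq_nonneg (v x), sq_nonneg ((v x)^2 - 2*β),
      sq_nonneg ((u x)^2 - (β - ω))]
  -- the level set meets the axes only at special points
  have haxis1 : ∀ x, u x = 0 → v x = 0 := by
    intro x hux
    have h := hE0 x
    rw [hux] at h
    have h2 : (v x)^2 = 0 := by nlinarith [sq_nonneg (v x), sq_nonneg ((v x)^2)]
    exact pow_eq_zero_iff two_ne_zero |>.mp h2
  have haxis2 : ∀ x, v x = 0 → u x ^ 2 = 0 ∨ u x ^ 2 = 2 * (β - ω) := by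
    intro x hvx
    have h := hE0 x
    rw [hvx] at h
    have h2 : (u x)^2 * ((u x)^2 - 2*(β-ω)) = 0 := by linear_combination 4*h
    rcases mul_eq_zero.mp h2 with h3 | h3
    · exact Or.inl h3
    · exact Or.inr (by linarith)
  -- the vector field is Lipschitz on the ball containing the orbit
  set R : ℝ := Real.sqrt (2*β) with hR
  have hRsq : R^2 = 2*β := Real.sq_sqrt (by linarith)
  set F : ℝ × ℝ → ℝ × ℝ := fun p => (-(ω + β) * p.2 - p.2 ^ 3, (ω - β) * p.1 + p.1 ^ 3)
    with hF
  set K : NNReal := (ω + 7*β).toNNReal with hK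
  have hKval : (K : ℝ) = ω + 7*β := Real.coe_toNNReal _ (by linarith)
  have hcube : ∀ a b : ℝ, a^2 ≤ 2*β → b^2 ≤ 2*β → |a^3 - b^3| ≤ 6*β * |a - b| := by
    intro a b ha hb
    have h : a^3 - b^3 = (a - b) * (a^2 + a*b + b^2) := by ring
    rw [h, abs_mul, mul_comm]
    apply mul_le_mul_of_nonneg_right _ (abs_nonneg _)
    rw [abs_le]
    constructor
    · nlinarith [sq_nonneg (a + b)]
    · nlinarith [sq_nonneg (a - b)]
  have hmemsq : ∀ p : ℝ × ℝ, p ∈ closedBall (0 : ℝ × ℝ) R → p.1^2 ≤ 2*β ∧ p.2^2 ≤ 2*β := by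
    intro p hp
    rw [mem_closedBall_zero_iff] at hp
    have h1 : ‖p.1‖ ≤ R := le_trans (norm_fst_le p) hp
    have h2 : ‖p.2‖ ≤ R := le_trans (norm_snd_le p) hp
    constructor
    · calc p.1^2 = ‖p.1‖^2 := (sq_abs _).symm
        _ ≤ R^2 := pow_le_pow_left₀ (norm_nonneg _) h1 2
        _ = 2*β := hRsq
    · calc p.2^2 = ‖p.2‖^2 := (sq_abs _).symm
        _ ≤ R^2 := pow_le_pow_left₀ (norm_nonneg _) h2 2
        _ = 2*β := hRsq
  have hlip : LipschitzOnWith K F (closedBall (0 : ℝ × ℝ) R) := by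
    rw [lipschitzOnWith_iff_dist_le_mul]
    intro p hp q hq
    obtain ⟨hp1, hp2⟩ := hmemsq p hp
    obtain ⟨hq1, hq2⟩ := hmemsq q hq
    rw [Prod.dist_eq, Prod.dist_eq, hKval]
    simp only [Real.dist_eq, F]
    apply max_le
    · have h1 : |(-(ω + β) * p.2 - p.2 ^ 3) - (-(ω + β) * q.2 - q.2 ^ 3)|
          ≤ (ω + β) * |p.2 - q.2| + 6*β*|p.2 - q.2| := by
        have e : (-(ω + β) * p.2 - p.2 ^ 3) - (-(ω + β) * q.2 - q.2 ^ 3)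
            = -(ω+β)*(p.2 - q.2) - (p.2^3 - q.2^3) := by ring
        rw [e]
        refine le_trans (abs_sub _ _) ?_
        gcongr
        · rw [abs_mul, abs_neg, abs_of_pos (by linarith : (0:ℝ) < ω + β)]
        · exact hcube _ _ hp2 hq2
      refine le_trans h1 ?_
      nlinarith [abs_nonneg (p.2 - q.2), le_max_right |p.1 - q.1| |p.2 - q.2|,
        abs_nonneg (p.1 - q.1)]
    · have h1 : |((ω - β) * p.1 + p.1 ^ 3) - ((ω - β) * q.1 + q.1 ^ 3)|
          ≤ (β - ω) * |p.1 - q.1| + 6*β*|p.1 - q.1| := by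
        have e : ((ω - β) * p.1 + p.1 ^ 3) - ((ω - β) * q.1 + q.1 ^ 3)
            = (ω-β)*(p.1 - q.1) + (p.1^3 - q.1^3) := by ring
        rw [e]
        refine le_trans (abs_add_le _ _) ?_
        gcongr
        · rw [abs_mul, abs_of_neg (by linarith : ω - β < 0)]
          apply le_of_eq; ring_nf
        · exact hcube _ _ hp1 hq1
      refine le_trans h1 ?_
      nlinarith [abs_nonneg (p.2 - q.2), le_max_left |p.1 - q.1| |p.2 - q.2|,
        abs_nonneg (p.1 - q.1)]
  -- the orbit never reaches the origin in finite time
  have hF0 : F (0, 0) = (0, 0) := by simp [F]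
  have hmem : ∀ t : ℝ, (u t, v t) ∈ closedBall (0 : ℝ × ℝ) R := by
    intro t
    rw [mem_closedBall_zero_iff, Prod.norm_def]
    apply max_le
    · rw [Real.norm_eq_abs, ← Real.sqrt_sq_eq_abs]
      exact Real.sqrt_le_sqrt (husq t)
    · rw [Real.norm_eq_abs, ← Real.sqrt_sq_eq_abs]
      exact Real.sqrt_le_sqrt (hvsqb t)
  have hzd : ∀ t : ℝ, HasDerivAt (fun x => (u x, v x)) (F (u t, v t)) t := fun t =>
    (hud t).prodMk (hvd t)
  have hnotzero : ∀ x1 : ℝ, 0 < x1 → ¬(u x1 = 0 ∧ v x1 = 0) := by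
    rintro x1 hx1 ⟨hu1, hv1⟩
    have heq : EqOn (fun x => (u x, v x)) (fun _ => ((0:ℝ), (0:ℝ))) (Icc 0 x1) := by
      apply ODE_solution_unique_of_mem_Icc_left (v := fun _ p => F p)
        (s := fun _ => closedBall (0 : ℝ × ℝ) R) (fun _ _ => hlip)
      · exact (Continuous.prodMk (hu.continuous) (hv.continuous)).continuousOn
      · intro t _
        exact (hzd t).hasDerivWithinAt
      · intro t _
        exact hmem t
      · exact continuousOn_const
      · intro t _
        have h0 : F ((0:ℝ), (0:ℝ)) = (0, 0) := hF0
        rw [h0]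
        exact hasDerivWithinAt_const _ _ _
      · intro t _
        exact mem_closedBall_self (Real.sqrt_nonneg _)
      · simp [hu1, hv1]
    have := heq (left_mem_Icc.mpr hx1.le)
    simp only [Prod.mk.injEq] at this
    exact absurd this.1 (ne_of_gt hu0pos)
  -- positivity of u and v on (0, ∞)
  have hdv0 : 0 < deriv v 0 := by
    have h3 : u 0 ^ 3 = u 0 * (2 * (β - ω)) := by rw [← hu0sq]; ring
    rw [hv' 0, h3]
    nlinarith [hu0pos]
  obtain ⟨δ, hδpos, hδ⟩ : ∃ δ > 0, ∀ y, |y| < δ → 0 < deriv v y ∧ 0 < u y := by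
    have h1 : ∀ᶠ y in 𝓝 (0:ℝ), 0 < deriv v y :=
      (hv.continuous_deriv le_rfl).continuousAt.eventually (eventually_gt_nhds hdv0)
    have h2 : ∀ᶠ y in 𝓝 (0:ℝ), 0 < u y :=
      hu.continuous.continuousAt.eventually (eventually_gt_nhds hu0pos)
    obtain ⟨δ, hδpos, hδ⟩ := Metric.eventually_nhds_iff.mp (h1.and h2)
    exact ⟨δ, hδpos, fun y hy => hδ (by simpa [Real.dist_eq] using hy)⟩
  have hB1 : ∀ y, 0 < y → y ≤ δ/2 → 0 < u y ∧ 0 < v y := by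
    intro y hy1 hy2
    have hmono : StrictMonoOn v (Icc 0 (δ/2)) := by
      apply strictMonoOn_of_deriv_pos (convex_Icc _ _) hv.continuous.continuousOn
      intro t ht
      rw [interior_Icc] at ht
      exact (hδ t (by rw [abs_of_pos ht.1]; linarith [ht.2])).1
    have hvpos : 0 < v y := by
      have := hmono (left_mem_Icc.mpr (by linarith)) ⟨hy1.le, hy2⟩ hy1
      rwa [hv0] at this
    exact ⟨(hδ y (by rw [abs_of_pos hy1]; linarith)).2, hvpos⟩
  have hpos : ∀ x, 0 < x → 0 < u x ∧ 0 < v x := by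
    by_contra hcon
    push_neg at hcon
    obtain ⟨x0, hx0pos, hx0bad⟩ := hcon
    set S : Set ℝ := {x | δ/2 ≤ x ∧ (u x ≤ 0 ∨ v x ≤ 0)} with hS_def
    have hSclosed : IsClosed S := by
      have : S = Ici (δ/2) ∩ ({x | u x ≤ 0} ∪ {x | v x ≤ 0}) := by
        ext x
        simp only [hS_def, Set.mem_setOf_eq, Set.mem_inter_iff, Set.mem_Ici,
          Set.mem_union]
      rw [this]
      exact isClosed_Ici.inter ((isClosed_le hu.continuous continuous_const).union
        (isClosed_le hv.continuous continuous_const))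
    have hbad : u x0 ≤ 0 ∨ v x0 ≤ 0 := by
      rcases le_or_gt (u x0) 0 with h | h
      · exact Or.inl h
      · exact Or.inr (hx0bad h)
    have hx0S : x0 ∈ S := by
      refine ⟨?_, hbad⟩
      by_contra hlt
      push_neg at hlt
      obtain ⟨h1, h2⟩ := hB1 x0 hx0pos (le_of_lt hlt)
      rcases hbad with h | h <;> linarith
    have hSbdd : BddBelow S := ⟨δ/2, fun x hx => hx.1⟩
    set x1 : ℝ := sInf S with hx1_def
    have hx1S : x1 ∈ S := hSclosed.csInf_mem ⟨x0, hx0S⟩ hSbdd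
    have hx1pos : 0 < x1 := lt_of_lt_of_le (by linarith) hx1S.1
    have hmid : ∀ y, 0 < y → y < x1 → 0 < u y ∧ 0 < v y := by
      intro y hy1 hy2
      rcases le_or_gt y (δ/2) with h | h
      · exact hB1 y hy1 h
      · by_contra hbad2
        push_neg at hbad2
        have : y ∈ S := by
          refine ⟨h.le, ?_⟩
          rcases le_or_gt (u y) 0 with h' | h'
          · exact Or.inl h'
          · exact Or.inr (hbad2 h')
        exact absurd (csInf_le hSbdd this) (not_le.mpr hy2)
    have hleft : ∀ f : ℝ → ℝ, Continuous f → (∀ y, 0 < y → y < x1 → 0 < f y) →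
        0 ≤ f x1 := by
      intro f hf hfpos
      have ht : Tendsto f (𝓝[<] x1) (𝓝 (f x1)) :=
        (hf.tendsto x1).mono_left nhdsWithin_le_nhds
      refine ge_of_tendsto ht ?_
      filter_upwards [Ioo_mem_nhdsLT_of_mem (show x1 ∈ Ioc 0 x1 from ⟨hx1pos, le_rfl⟩)]
        with y hy
      exact (hfpos y hy.1 hy.2).le
    have hu1nn : 0 ≤ u x1 := hleft u hu.continuous (fun y h1 h2 => (hmid y h1 h2).1)
    have hv1nn : 0 ≤ v x1 := hleft v hv.continuous (fun y h1 h2 => (hmid y h1 h2).2)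
    have hanti : StrictAntiOn u (Icc 0 x1) := by
      apply strictAntiOn_of_deriv_neg (convex_Icc _ _) hu.continuous.continuousOn
      intro t ht
      rw [interior_Icc] at ht
      have hvt : 0 < v t := (hmid t ht.1 ht.2).2
      rw [hu' t]
      nlinarith [pow_pos hvt 3]
    have hu1lt : u x1 < u 0 := hanti (left_mem_Icc.mpr hx1pos.le)
      (right_mem_Icc.mpr hx1pos.le) hx1pos
    rcases hx1S.2 with h | h
    · have hu1 : u x1 = 0 := le_antisymm h hu1nn
      exact hnotzero x1 hx1pos ⟨hu1, haxis1 x1 hu1⟩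
    · have hv1 : v x1 = 0 := le_antisymm h hv1nn
      rcases haxis2 x1 hv1 with h2 | h2
      · have hu1 : u x1 = 0 := pow_eq_zero_iff two_ne_zero |>.mp h2
        exact hnotzero x1 hx1pos ⟨hu1, hv1⟩
      · have : u x1 = u 0 := by
          have h0 : u x1 ^ 2 = u 0 ^ 2 := by rw [h2, hu0sq]
          nlinarith [hu1nn, hu0pos]
        linarith
  -- convergence
  have hunn : ∀ x, 0 ≤ x → 0 ≤ u x := by
    intro x hx
    rcases eq_or_lt_of_le hx with h | h
    · rw [← h]; exact hu0pos.le
    · exact (hpos x h).1.le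
  have hvnn : ∀ x, 0 ≤ x → 0 ≤ v x := by
    intro x hx
    rcases eq_or_lt_of_le hx with h | h
    · rw [← h, hv0]
    · exact (hpos x h).2.le
  have hantiu : AntitoneOn u (Ici 0) := by
    apply antitoneOn_of_deriv_nonpos (convex_Ici _) hu.continuous.continuousOn
      (fun t _ => (hu.differentiable one_ne_zero t).differentiableWithinAt)
    intro t ht
    rw [interior_Ici] at ht
    have hvt : 0 < v t := (hpos t ht).2
    rw [hu' t]
    nlinarith [pow_pos hvt 3]
  set w : ℝ → ℝ := fun x => u (max x 0) with hw_def
  have hwanti : Antitone w := fun x y hxy =>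
    hantiu (le_max_right x 0) (le_max_right y 0) (max_le_max hxy le_rfl)
  have hwbdd : BddBelow (Set.range w) := by
    refine ⟨0, ?_⟩
    rintro _ ⟨x, rfl⟩
    exact hunn _ (le_max_right x 0)
  set L : ℝ := ⨅ i, w i with hL_def
  have hwL : Tendsto w atTop (𝓝 L) := tendsto_atTop_ciInf hwanti hwbdd
  have huL : Tendsto u atTop (𝓝 L) := by
    refine hwL.congr' ?_
    filter_upwards [eventually_ge_atTop (0:ℝ)] with x hx
    simp [hw_def, max_eq_left hx]
  have hvv : ∀ x, ((v x)^2 + (β+ω))^2 = (β+ω)^2 + 2*(β-ω)*(u x)^2 - (u x)^4 := by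
    intro x
    linear_combination 4 * hE0 x
  set G : ℝ → ℝ := fun t => Real.sqrt (Real.sqrt ((β+ω)^2 + 2*(β-ω)*t^2 - t^4) - (β+ω))
    with hG_def
  have hvfor : ∀ x, 0 ≤ x → v x = G (u x) := by
    intro x hx
    have h1 : Real.sqrt (((v x)^2 + (β+ω))^2) = (v x)^2 + (β+ω) :=
      Real.sqrt_sq (by positivity)
    simp only [hG_def, ← hvv x, h1, add_sub_cancel_right]
    exact (Real.sqrt_sq (hvnn x hx)).symm
  have hGcont : Continuous G := by
    apply Real.continuous_sqrt.comp
    exact (Real.continuous_sqrt.comp (by continuity)).sub continuous_const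
  set V : ℝ := G L with hV_def
  have hV0 : 0 ≤ V := Real.sqrt_nonneg _
  have hvL : Tendsto v atTop (𝓝 V) := by
    refine ((hGcont.tendsto L).comp huL).congr' ?_
    filter_upwards [eventually_ge_atTop (0:ℝ)] with x hx
    exact (hvfor x hx).symm
  have hderu : Tendsto (deriv u) atTop (𝓝 (-(ω+β)*V - V^3)) := by
    have h := (hvL.const_mul (-(ω+β))).sub (hvL.pow 3)
    exact h.congr (fun x => (hu' x).symm)
  have hc1 : -(ω+β)*V - V^3 = 0 :=
    limit_of_deriv_eq_zero (fun x => (hu.differentiable one_ne_zero x).hasDerivAt) huL hderu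
  have hVzero : V = 0 := by nlinarith [pow_nonneg hV0 3]
  have hv_tends : Tendsto v atTop (𝓝 0) := hVzero ▸ hvL
  have hderv : Tendsto (deriv v) atTop (𝓝 ((ω-β)*L + L^3)) := by
    have h := (huL.const_mul (ω-β)).add (huL.pow 3)
    exact h.congr (fun x => (hv' x).symm)
  have hc2 : (ω-β)*L + L^3 = 0 :=
    limit_of_deriv_eq_zero (fun x => (hv.differentiable one_ne_zero x).hasDerivAt) hvL hderv
  have hc3 : L^4/4 + β/2*(0 - L^2) + ω/2*(L^2 + 0) = 0 := by
    have h1 : Tendsto (fun x => (u x)^4/4 + (v x)^4/4 + β/2*((v x)^2 - (u x)^2)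
        + ω/2*((u x)^2 + (v x)^2)) atTop
        (𝓝 (L^4/4 + (0:ℝ)^4/4 + β/2*((0:ℝ)^2 - L^2) + ω/2*(L^2 + (0:ℝ)^2))) :=
      ((((huL.pow 4).div_const 4).add ((hv_tends.pow 4).div_const 4)).add
        (((hv_tends.pow 2).sub (huL.pow 2)).const_mul (β/2))).add
        (((huL.pow 2).add (hv_tends.pow 2)).const_mul (ω/2))
    have h1' : Tendsto (fun _ : ℝ => (0:ℝ)) atTop
        (𝓝 (L^4/4 + (0:ℝ)^4/4 + β/2*((0:ℝ)^2 - L^2) + ω/2*(L^2 + (0:ℝ)^2))) :=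
      (tendsto_congr (fun x => hE0 x)).mp h1
    have h2 := tendsto_nhds_unique h1' tendsto_const_nhds
    linear_combination h2
  have hL2 : (ω - β) * L^2 = 0 := by linear_combination 4*hc3 - L*hc2
  have hLzero : L = 0 := by
    have h := (mul_eq_zero.mp hL2).resolve_left (by linarith : ω - β ≠ 0)
    exact pow_eq_zero_iff two_ne_zero |>.mp h
  exact (hLzero ▸ huL).prodMk_nhds hv_tends

end

/-- Every `C¹` solution of the Hamiltonian system `u' = −(ω+β)v − v³`, `v' = (ω−β)u + u³`
with initial condition `u(0) = √(2(β−ω))`, `v(0) = 0` is a homoclinic orbit to the origin: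
`(u(x), v(x)) → (0,0)` as `x → ±∞`. -/
theorem homoclinic_orbit (β ω : ℝ) (hβ : 0 < β) (hω : 0 < ω) (hωβ : ω < β)
    (u v : ℝ → ℝ) (hu : ContDiff ℝ 1 u) (hv : ContDiff ℝ 1 v)
    (hu' : ∀ x : ℝ, deriv u x = -(ω + β) * v x - (v x) ^ 3)
    (hv' : ∀ x : ℝ, deriv v x = (ω - β) * u x + (u x) ^ 3)
    (hu0 : u 0 = Real.sqrt (2 * (β - ω))) (hv0 : v 0 = 0) :
    Tendsto (fun x => (u x, v x)) atTop (𝓝 ((0 : ℝ), (0 : ℝ))) ∧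
    Tendsto (fun x => (u x, v x)) atBot (𝓝 ((0 : ℝ), (0 : ℝ))) := by
  have hfwd := homoclinic_forward β ω hβ hω hωβ u v hu hv hu' hv' hu0 hv0
  refine ⟨hfwd, ?_⟩
  -- the reflected solution
  set U : ℝ → ℝ := fun x => u (-x) with hU_def
  set W : ℝ → ℝ := fun x => -v (-x) with hW_def
  have hud : ∀ x, HasDerivAt u (-(ω + β) * v x - (v x) ^ 3) x := fun x => by
    rw [← hu' x]; exact (hu.differentiable one_ne_zero x).hasDerivAt
  have hvd : ∀ x, HasDerivAt v ((ω - β) * u x + (u x) ^ 3) x := fun x => by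
    rw [← hv' x]; exact (hv.differentiable one_ne_zero x).hasDerivAt
  have hUd : ∀ x, HasDerivAt U ((-(ω + β) * v (-x) - (v (-x)) ^ 3) * (-1)) x := fun x =>
    (hud (-x)).comp x (hasDerivAt_neg x)
  have hWd : ∀ x, HasDerivAt W (-(((ω - β) * u (-x) + (u (-x)) ^ 3) * (-1))) x := fun x =>
    ((hvd (-x)).comp x (hasDerivAt_neg x)).neg
  have hUc : ContDiff ℝ 1 U := hu.comp contDiff_neg
  have hWc : ContDiff ℝ 1 W := (hv.comp contDiff_neg).neg
  have hU' : ∀ x : ℝ, deriv U x = -(ω + β) * W x - (W x) ^ 3 := by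
    intro x
    rw [(hUd x).deriv]
    simp only [hW_def]
    ring
  have hW' : ∀ x : ℝ, deriv W x = (ω - β) * U x + (U x) ^ 3 := by
    intro x
    rw [(hWd x).deriv]
    simp only [hU_def]
    ring
  have hU0 : U 0 = Real.sqrt (2 * (β - ω)) := by simp [hU_def, hu0]
  have hW0 : W 0 = 0 := by simp [hW_def, hv0]
  have hb := homoclinic_forward β ω hβ hω hωβ U W hUc hWc hU' hW' hU0 hW0
  have hb2 : Tendsto (fun y => (U (-y), W (-y))) atBot (𝓝 ((0:ℝ), (0:ℝ))) :=
    hb.comp tendsto_neg_atBot_atTop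
  have hb3 : Tendsto (fun y => (u y, -(v y))) atBot (𝓝 ((0:ℝ), (0:ℝ))) := by
    refine hb2.congr (fun y => ?_)
    simp [hU_def, hW_def]
  have hmap : Tendsto (fun p : ℝ × ℝ => (p.1, -p.2)) (𝓝 ((0:ℝ), (0:ℝ)))
      (𝓝 ((0:ℝ), (0:ℝ))) := by
    have := (continuous_fst.prodMk continuous_snd.neg).tendsto ((0:ℝ), (0:ℝ))
    simpa using this
  have := hmap.comp hb3
  refine this.congr (fun y => ?_)
  simp
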